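/- arXiv:1804.11267 — 2 statements merged into one kernel-verified Lean document; each statement's English description precedes it below -/
import Mathlib

section
/- Let 0 < δ < 1/(e−1). Then ∫_0^δ (log(1/u + 1))^{1/2} du ≤ 2 δ (log(1/δ + 1))^{1/2}. -/
open Real MeasureTheory intervalIntegral

lemma log_le_two_sqrt' {x : ℝ} (hx : 0 < x) : Real.log x ≤ 2 * Real.sqrt x := by
  have h := Real.log_le_sub_one_of_pos (Real.sqrt_pos.mpr hx)
  rw [Real.log_sqrt hx.le] at h
  nlinarith [Real.sqrt_nonneg x]

lemma integrableOn_log_Ioc {δ : ℝ} (hδ0 : 0 < δ) (hδ1 : δ ≤ 1) :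
    IntegrableOn Real.log (Set.Ioc 0 δ) volume := by
  have hrpow : IntegrableOn (fun u : ℝ => u ^ (-(1/2) : ℝ)) (Set.Ioc 0 δ) volume := by
    have := intervalIntegral.intervalIntegrable_rpow' (a := 0) (b := δ) (r := -(1/2))
      (by norm_num)
    rwa [intervalIntegrable_iff_integrableOn_Ioc_of_le hδ0.le] at this
  refine Integrable.mono (hrpow.const_mul 2) Real.measurable_log.aestronglyMeasurable ?_
  filter_upwards [ae_restrict_mem measurableSet_Ioc] with u hu
  have hu0 : 0 < u := hu.1
  have hu1 : u ≤ 1 := hu.2.trans hδ1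
  have hlog : Real.log u ≤ 0 := Real.log_nonpos hu0.le hu1
  have hbound : -Real.log u ≤ 2 * Real.sqrt u⁻¹ := by
    rw [← Real.log_inv]
    exact log_le_two_sqrt' (by positivity)
  have hrw : u ^ (-(1/2) : ℝ) = Real.sqrt u⁻¹ := by
    rw [Real.sqrt_inv, Real.sqrt_eq_rpow, ← Real.rpow_neg hu0.le]
  rw [Real.norm_eq_abs, Real.norm_eq_abs, abs_of_nonpos hlog, hrw,
    abs_of_nonneg (by positivity)]
  exact hbound

theorem integral_sqrt_log_le {δ : ℝ} (hδ0 : 0 < δ) (hδ : δ < 1 / (Real.exp 1 - 1)) :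
    ∫ u in (0:ℝ)..δ, Real.sqrt (Real.log (1 / u + 1))
      ≤ 2 * δ * Real.sqrt (Real.log (1 / δ + 1)) := by
  have he : (2 : ℝ) < Real.exp 1 := by
    have := Real.exp_one_gt_d9; linarith
  have hδ1 : δ < 1 := by
    have h1 : 1 / (Real.exp 1 - 1) < 1 := by
      rw [div_lt_one (by linarith)]; linarith
    linarith
  set L := Real.log (1 / δ + 1) with hLdef
  have hL1 : 1 ≤ L := by
    have h1 : Real.exp 1 - 1 < 1 / δ := by
      have := one_div_lt_one_div_of_lt hδ0 hδ
      rwa [one_div_one_div] at this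
    have : Real.exp 1 ≤ 1 / δ + 1 := by linarith
    calc 1 = Real.log (Real.exp 1) := (Real.log_exp 1).symm
    _ ≤ L := Real.log_le_log (Real.exp_pos 1) this
  have hL0 : 0 < L := by linarith
  have hsL : 0 < Real.sqrt L := Real.sqrt_pos.mpr hL0
  have hsLsq : Real.sqrt L * Real.sqrt L = L := Real.mul_self_sqrt hL0.le
  -- integrability of u ↦ log (1/u + 1) on (0, δ]
  have hfeq : ∀ u ∈ Set.Ioc (0:ℝ) δ,
      Real.log (1 / u + 1) = Real.log (1 + u) - Real.log u := by
    intro u hu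
    rw [← Real.log_div (by linarith [hu.1] : (1:ℝ) + u ≠ 0) hu.1.ne']
    congr 1
    rw [add_div, div_self hu.1.ne']
  have h1cont : ContinuousOn (fun u : ℝ => Real.log (1 + u)) (Set.Icc 0 δ) := by
    apply ContinuousOn.log (continuousOn_const.add continuousOn_id)
    intro x hx
    have := hx.1
    intro h
    change 1 + x = 0 at h
    linarith
  have hf_int : IntegrableOn (fun u => Real.log (1 / u + 1)) (Set.Ioc 0 δ) volume := by
    have h1 : IntegrableOn (fun u : ℝ => Real.log (1 + u)) (Set.Ioc 0 δ) volume :=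
      (h1cont.integrableOn_Icc).mono_set Set.Ioc_subset_Icc_self
    have h2 := integrableOn_log_Ioc hδ0 hδ1.le
    have h3 : IntegrableOn (fun u : ℝ => Real.log (1 + u) - Real.log u)
        (Set.Ioc 0 δ) volume := h1.sub h2
    refine h3.congr ?_
    filter_upwards [ae_restrict_mem measurableSet_Ioc] with u hu
    exact (hfeq u hu).symm
  have hf_ii : IntervalIntegrable (fun u => Real.log (1 / u + 1)) volume 0 δ :=
    (intervalIntegrable_iff_integrableOn_Ioc_of_le hδ0.le).mpr hf_int
  -- FTC: compute the integral of log (1/u + 1)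
  have hFval : ∫ u in (0:ℝ)..δ, Real.log (1 / u + 1)
      = (1 + δ) * Real.log (1 + δ) - δ * Real.log δ := by
    have hcont : ContinuousOn
        (fun u : ℝ => (1 + u) * Real.log (1 + u) - u * Real.log u) (Set.Icc 0 δ) := by
      apply Continuous.continuousOn
      exact (Real.continuous_mul_log.comp (continuous_const.add continuous_id)).sub
        Real.continuous_mul_log
    have hderiv : ∀ x ∈ Set.Ioo (0:ℝ) δ,
        HasDerivWithinAt (fun u : ℝ => (1 + u) * Real.log (1 + u) - u * Real.log u)
          (Real.log (1 / x + 1)) (Set.Ioi x) x := by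
      intro x hx
      have hx0 : 0 < x := hx.1
      have h1 : HasDerivAt (fun u : ℝ => (1 + u) * Real.log (1 + u))
          ((Real.log (1 + x) + 1) * 1) x := by
        exact HasDerivAt.comp x (Real.hasDerivAt_mul_log (by linarith : (1:ℝ) + x ≠ 0))
          ((hasDerivAt_id x).const_add 1)
      have h2 : HasDerivAt (fun u : ℝ => u * Real.log u) (Real.log x + 1) x :=
        Real.hasDerivAt_mul_log hx0.ne'
      have h3 := h1.sub h2
      have heq : (Real.log (1 + x) + 1) * 1 - (Real.log x + 1)
          = Real.log (1 / x + 1) := by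
        rw [hfeq x ⟨hx0, hx.2.le⟩]; ring
      rw [heq] at h3
      exact h3.hasDerivWithinAt
    have := intervalIntegral.integral_eq_sub_of_hasDeriv_right_of_le hδ0.le hcont hderiv
      hf_ii
    simpa using this
  -- bound the integral of log (1/u + 1)
  have hIf : ∫ u in (0:ℝ)..δ, Real.log (1 / u + 1) ≤ 2 * δ * L := by
    rw [hFval]
    have hlogδ : L = Real.log (1 + δ) - Real.log δ := hfeq δ ⟨hδ0, le_refl δ⟩
    have h1 : Real.log (1 + δ) ≤ δ := by
      have := Real.log_le_sub_one_of_pos (by linarith : (0:ℝ) < 1 + δ)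
      linarith
    have h2 : 0 ≤ Real.log (1 + δ) := Real.log_nonneg (by linarith)
    nlinarith
  -- pointwise AM-GM bound
  set g : ℝ → ℝ := fun u => (Real.log (1 / u + 1) + L) / (2 * Real.sqrt L) with hgdef
  have hg_ii : IntervalIntegrable g volume 0 δ :=
    (hf_ii.add (intervalIntegrable_const)).div_const _
  have hpt : ∀ x ∈ Set.Icc (0:ℝ) δ, Real.sqrt (Real.log (1 / x + 1)) ≤ g x := by
    intro x hx
    have hx1 : (0:ℝ) ≤ 1 / x := one_div_nonneg.mpr hx.1
    have hlog0 : 0 ≤ Real.log (1 / x + 1) := Real.log_nonneg (by linarith)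
    set y := Real.log (1 / x + 1)
    have h := sq_nonneg (Real.sqrt y - Real.sqrt L)
    rw [sub_sq, Real.sq_sqrt hlog0, Real.sq_sqrt hL0.le] at h
    rw [hgdef]
    rw [le_div_iff₀ (by positivity)]
    nlinarith
  -- integrability of the sqrt integrand
  have hmeas : Measurable (fun u : ℝ => Real.sqrt (Real.log (1 / u + 1))) :=
    Real.continuous_sqrt.measurable.comp (Real.measurable_log.comp
      ((measurable_const.div measurable_id).add measurable_const))
  have hsqrt_ii : IntervalIntegrable
      (fun u => Real.sqrt (Real.log (1 / u + 1))) volume 0 δ := by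
    rw [intervalIntegrable_iff_integrableOn_Ioc_of_le hδ0.le]
    have hg_int : IntegrableOn g (Set.Ioc 0 δ) volume :=
      (intervalIntegrable_iff_integrableOn_Ioc_of_le hδ0.le).mp hg_ii
    refine Integrable.mono hg_int hmeas.aestronglyMeasurable ?_
    filter_upwards [ae_restrict_mem measurableSet_Ioc] with u hu
    have h1 := hpt u ⟨hu.1.le, hu.2⟩
    have h2 : 0 ≤ Real.sqrt (Real.log (1 / u + 1)) := Real.sqrt_nonneg _
    rw [Real.norm_eq_abs, Real.norm_eq_abs, abs_of_nonneg h2,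
      abs_of_nonneg (le_trans h2 h1)]
    exact h1
  -- combine
  have hmono : ∫ u in (0:ℝ)..δ, Real.sqrt (Real.log (1 / u + 1))
      ≤ ∫ u in (0:ℝ)..δ, g u :=
    intervalIntegral.integral_mono_on hδ0.le hsqrt_ii hg_ii hpt
  have hgint : ∫ u in (0:ℝ)..δ, g u
      = ((∫ u in (0:ℝ)..δ, Real.log (1 / u + 1)) + δ * L) / (2 * Real.sqrt L) := by
    rw [hgdef]
    rw [intervalIntegral.integral_div]
    congr 1
    rw [intervalIntegral.integral_add hf_ii intervalIntegrable_const,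
      intervalIntegral.integral_const]
    simp [smul_eq_mul]
  have hfinal : ((∫ u in (0:ℝ)..δ, Real.log (1 / u + 1)) + δ * L) / (2 * Real.sqrt L)
      ≤ 2 * δ * Real.sqrt L := by
    rw [div_le_iff₀ (by positivity)]
    nlinarith
  calc ∫ u in (0:ℝ)..δ, Real.sqrt (Real.log (1 / u + 1))
      ≤ ∫ u in (0:ℝ)..δ, g u := hmono
    _ = ((∫ u in (0:ℝ)..δ, Real.log (1 / u + 1)) + δ * L) / (2 * Real.sqrt L) := hgint
    _ ≤ 2 * δ * Real.sqrt L := hfinal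
end

section
/- Let v₀(x) = (1/x) e^{−α₀x − θ₀(x)} and v(x) = (1/x) e^{−αx − θ(x)} for x > 0, where α₀, α ≥ α_min > 0, and θ₀, θ are bounded measurable functions supported on a compact interval [b_low, b_up] with 0 < b_low < b_up < ∞ and ‖θ₀‖_∞, ‖θ‖_∞ ≤ θ_bar. Then there exists a constant C (depending only on α_min, θ_bar, b_low, b_up and an upper bound on α₀, α) such that ∫_0^∞ |v(x) − v₀(x)| dx ≤ C(|α − α₀| + ‖θ − θ₀‖_∞). -/
open Real MeasureTheory Set

lemma abs_exp_sub_exp_le' {a b c : ℝ} (ha : a ≤ c) (hb : b ≤ c) :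
    |Real.exp a - Real.exp b| ≤ Real.exp c * |a - b| := by
  wlog h : b ≤ a generalizing a b
  · rw [abs_sub_comm, abs_sub_comm a b]; exact this hb ha (le_of_not_ge h)
  rw [abs_of_nonneg (sub_nonneg.2 (Real.exp_le_exp.2 h)), abs_of_nonneg (sub_nonneg.2 h)]
  have h1 : Real.exp a - Real.exp b = Real.exp a * (1 - Real.exp (b - a)) := by
    rw [mul_sub, mul_one, ← Real.exp_add]; ring_nf
  rw [h1]
  have h2 : 1 - Real.exp (b - a) ≤ a - b := by
    have := Real.add_one_le_exp (b - a); linarith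
  have h3 : (0:ℝ) ≤ a - b := by linarith
  calc Real.exp a * (1 - Real.exp (b - a)) ≤ Real.exp a * (a - b) :=
        mul_le_mul_of_nonneg_left h2 (Real.exp_pos a).le
    _ ≤ Real.exp c * (a - b) :=
        mul_le_mul_of_nonneg_right (Real.exp_le_exp.2 ha) h3

/-- L¹-Lipschitz dependence of the Lévy density `v(x) = x⁻¹ e^{−αx−θ(x)}` on the
parameters `(α, θ)`: there is a constant `C`, depending only on the bounds
`α_min, α_max, θ_bar, b_low, b_up`, such that
`∫₀^∞ |v − v₀| ≤ C (|α − α₀| + ‖θ − θ₀‖_∞)`. -/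
theorem levy_density_L1_lipschitz
    (αmin αmax θbar blow bup : ℝ) (hαmin : 0 < αmin) (hαminmax : αmin ≤ αmax)
    (hblow : 0 < blow) (hbb : blow < bup) (hθbar : 0 ≤ θbar) :
    ∃ C : ℝ, 0 < C ∧
      ∀ (α α₀ : ℝ) (θ θ₀ : ℝ → ℝ),
        α ∈ Set.Icc αmin αmax → α₀ ∈ Set.Icc αmin αmax →
        Measurable θ → Measurable θ₀ →
        (∀ x, |θ x| ≤ θbar) → (∀ x, |θ₀ x| ≤ θbar) →
        (∀ x, x ∉ Set.Icc blow bup → θ x = 0) →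
        (∀ x, x ∉ Set.Icc blow bup → θ₀ x = 0) →
        ∀ M : ℝ, (∀ x, |θ x - θ₀ x| ≤ M) →
          ∫ x in Set.Ioi (0:ℝ),
              |(1 / x) * Real.exp (-α * x - θ x) - (1 / x) * Real.exp (-α₀ * x - θ₀ x)|
            ≤ C * (|α - α₀| + M) := by
  refine ⟨Real.exp θbar * (1 / αmin + (bup - blow) / blow), ?_, ?_⟩
  · have h1 : 0 < 1 / αmin := by positivity
    have h2 : 0 < (bup - blow) / blow := div_pos (by linarith) hblow
    positivity
  intro α α₀ θ θ₀ hα hα₀ hθm hθ₀m hθb hθ₀b hθs hθ₀s M hM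
  have hM0 : 0 ≤ M := le_trans (abs_nonneg _) (hM 0)
  set D := |α - α₀| with hD
  have hD0 : 0 ≤ D := abs_nonneg _
  -- the dominating function
  set g : ℝ → ℝ := fun x =>
    Real.exp θbar * D * Real.exp (-αmin * x)
      + Real.exp θbar * (M / blow) * (Set.Icc blow bup).indicator (fun _ => (1:ℝ)) x with hg
  have hint1 : IntegrableOn (fun x : ℝ => Real.exp (-αmin * x)) (Ioi 0) :=
    exp_neg_integrableOn_Ioi 0 hαmin
  have hint2 : Integrable ((Set.Icc blow bup).indicator (fun _ => (1:ℝ))) := by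
    rw [integrable_indicator_iff measurableSet_Icc]
    exact integrableOn_const (by rw [Real.volume_Icc]; exact ENNReal.ofReal_ne_top)
  have hgint : IntegrableOn g (Ioi 0) := by
    exact ((hint1.const_mul _).add ((hint2.integrableOn).const_mul _))
  -- pointwise bound
  have hbound : ∀ x ∈ Ioi (0:ℝ),
      |(1 / x) * Real.exp (-α * x - θ x) - (1 / x) * Real.exp (-α₀ * x - θ₀ x)| ≤ g x := by
    intro x hx
    have hx0 : 0 < x := hx
    have hc1 : -α * x - θ x ≤ -αmin * x + θbar := by
      have h1 : αmin * x ≤ α * x := mul_le_mul_of_nonneg_right hα.1 hx0.le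
      have h2 : -θ x ≤ θbar := by have := abs_le.1 (hθb x); linarith
      nlinarith
    have hc2 : -α₀ * x - θ₀ x ≤ -αmin * x + θbar := by
      have h1 : αmin * x ≤ α₀ * x := mul_le_mul_of_nonneg_right hα₀.1 hx0.le
      have h2 : -θ₀ x ≤ θbar := by have := abs_le.1 (hθ₀b x); linarith
      nlinarith
    have key := abs_exp_sub_exp_le' hc1 hc2
    have habs : |(-α * x - θ x) - (-α₀ * x - θ₀ x)| ≤ D * x + |θ x - θ₀ x| := by
      have : (-α * x - θ x) - (-α₀ * x - θ₀ x) = -((α - α₀) * x) - (θ x - θ₀ x) := by ring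
      rw [this]
      calc |(-((α - α₀) * x)) - (θ x - θ₀ x)| ≤ |(α - α₀) * x| + |θ x - θ₀ x| := by
            rw [← abs_neg ((α - α₀) * x)] ; exact abs_sub _ _
        _ = D * x + |θ x - θ₀ x| := by rw [abs_mul, abs_of_pos hx0]
    have hexp : Real.exp (-αmin * x + θbar) = Real.exp (-αmin * x) * Real.exp θbar :=
      Real.exp_add _ _
    have step1 : |(1 / x) * Real.exp (-α * x - θ x) - (1 / x) * Real.exp (-α₀ * x - θ₀ x)|
        ≤ (1 / x) * (Real.exp (-αmin * x) * Real.exp θbar * (D * x + |θ x - θ₀ x|)) := by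
      rw [← mul_sub, abs_mul, abs_of_pos (by positivity : (0:ℝ) < 1 / x)]
      refine mul_le_mul_of_nonneg_left ?_ (by positivity)
      calc |Real.exp (-α * x - θ x) - Real.exp (-α₀ * x - θ₀ x)|
          ≤ Real.exp (-αmin * x + θbar) * |(-α * x - θ x) - (-α₀ * x - θ₀ x)| := key
        _ ≤ Real.exp (-αmin * x + θbar) * (D * x + |θ x - θ₀ x|) :=
            mul_le_mul_of_nonneg_left habs (Real.exp_pos _).le
        _ = Real.exp (-αmin * x) * Real.exp θbar * (D * x + |θ x - θ₀ x|) := by rw [hexp]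
    refine step1.trans ?_
    have heq : (1 / x) * (Real.exp (-αmin * x) * Real.exp θbar * (D * x + |θ x - θ₀ x|))
        = Real.exp θbar * D * Real.exp (-αmin * x)
          + Real.exp θbar * Real.exp (-αmin * x) * (|θ x - θ₀ x| / x) := by
      field_simp
    rw [heq, hg]
    have hle1 : Real.exp (-αmin * x) ≤ 1 := by
      rw [← Real.exp_zero]
      exact Real.exp_le_exp.2 (by nlinarith)
    apply add_le_add (le_refl _)
    -- second term
    by_cases hxI : x ∈ Set.Icc blow bup
    · rw [Set.indicator_of_mem hxI]
      have h1 : |θ x - θ₀ x| / x ≤ M / blow := by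
        apply div_le_div₀ (le_trans (abs_nonneg _) (hM x) ) (hM x) hblow hxI.1
      calc Real.exp θbar * Real.exp (-αmin * x) * (|θ x - θ₀ x| / x)
          ≤ Real.exp θbar * 1 * (M / blow) := by
            apply mul_le_mul
            · exact mul_le_mul_of_nonneg_left hle1 (Real.exp_pos _).le
            · exact h1
            · positivity
            · positivity
        _ = Real.exp θbar * (M / blow) * 1 := by ring
    · rw [Set.indicator_of_notMem hxI]
      have : θ x - θ₀ x = 0 := by rw [hθs x hxI, hθ₀s x hxI]; ring
      rw [this]
      simp
  -- integrate
  have hmono : ∫ x in Ioi (0:ℝ),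
      |(1 / x) * Real.exp (-α * x - θ x) - (1 / x) * Real.exp (-α₀ * x - θ₀ x)|
      ≤ ∫ x in Ioi (0:ℝ), g x := by
    refine integral_mono_of_nonneg (ae_of_all _ fun x => abs_nonneg _) hgint ?_
    exact (ae_restrict_iff' measurableSet_Ioi).2 (ae_of_all _ hbound)
  refine hmono.trans ?_
  have hI1 : ∫ x in Ioi (0:ℝ), Real.exp (-αmin * x) = 1 / αmin := by
    have := integral_comp_mul_left_Ioi (fun y => Real.exp (-y)) 0 hαmin
    simp only [mul_zero, smul_eq_mul] at this
    rw [show (fun x => Real.exp (-αmin * x)) = fun x => Real.exp (-(αmin * x)) by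
      funext x; ring_nf]
    rw [this, integral_exp_neg_Ioi_zero]
    simp [one_div]
  have hI2 : ∫ x in Ioi (0:ℝ), (Set.Icc blow bup).indicator (fun _ => (1:ℝ)) x
      = bup - blow := by
    rw [setIntegral_indicator measurableSet_Icc]
    have : Ioi (0:ℝ) ∩ Set.Icc blow bup = Set.Icc blow bup := by
      apply Set.inter_eq_right.2
      intro y hy
      exact lt_of_lt_of_le hblow hy.1
    rw [this]
    simp [Real.volume_Icc, ENNReal.toReal_ofReal (by linarith : (0:ℝ) ≤ bup - blow), hbb.le]
  have hgval : ∫ x in Ioi (0:ℝ), g x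
      = Real.exp θbar * D * (1 / αmin) + Real.exp θbar * (M / blow) * (bup - blow) := by
    rw [hg]
    rw [integral_add (hint1.const_mul _) (hint2.integrableOn.const_mul _),
      integral_const_mul, integral_const_mul, hI1, hI2]
  rw [hgval]
  have hE : (0:ℝ) < Real.exp θbar := Real.exp_pos _
  have h1 : Real.exp θbar * D * (1 / αmin)
      ≤ Real.exp θbar * (1 / αmin + (bup - blow) / blow) * D := by
    have : (0:ℝ) ≤ (bup - blow) / blow := div_nonneg (by linarith) hblow.le
    nlinarith [mul_nonneg hE.le hD0]
  have h2 : Real.exp θbar * (M / blow) * (bup - blow)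
      ≤ Real.exp θbar * (1 / αmin + (bup - blow) / blow) * M := by
    have heq : Real.exp θbar * (M / blow) * (bup - blow)
        = Real.exp θbar * ((bup - blow) / blow) * M := by field_simp
    rw [heq]
    have : (0:ℝ) < 1 / αmin := by positivity
    nlinarith [mul_nonneg hE.le hM0]
  calc Real.exp θbar * D * (1 / αmin) + Real.exp θbar * (M / blow) * (bup - blow)
      ≤ Real.exp θbar * (1 / αmin + (bup - blow) / blow) * D
        + Real.exp θbar * (1 / αmin + (bup - blow) / blow) * M := add_le_add h1 h2
    _ = Real.exp θbar * (1 / αmin + (bup - blow) / blow) * (D + M) := by ring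
end
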